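/- Fix an integer d ≥ 2 and let a : ℤ/dℤ → ℂ. Then the following two conditions are equivalent: (i) for all i, j ∈ ℤ/dℤ, |⟨a|X^iZ^j|a⟩|² = (d·δ_{i,0}·δ_{j,0} + 1)/(d+1); (ii) for all i, k ∈ ℤ/dℤ, G(i,k) = (δ_{i,0} + δ_{k,0})/(d+1). -/

import Mathlib

open scoped BigOperators

/-- `ω = exp(2πi/d)`. -/
noncomputable def omeg (d : ℕ) : ℂ := Complex.exp (2 * Real.pi * Complex.I / d)

/-- The shift matrix `X`, with entries `X_{r,s} = δ_{r,s+1}`. -/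
def Xmat (d : ℕ) : Matrix (ZMod d) (ZMod d) ℂ :=
  fun r s => if r = s + 1 then 1 else 0

/-- The clock matrix `Z`, with entries `Z_{r,s} = ω^r δ_{r,s}`. -/
noncomputable def Zmat (d : ℕ) : Matrix (ZMod d) (ZMod d) ℂ :=
  fun r s => if r = s then omeg d ^ r.val else 0

/-- `⟨a|M|a⟩ = Σ_{r,s} conj(a_r)·M_{r,s}·a_s`. -/
noncomputable def overlap (d : ℕ) [NeZero d] (a : ZMod d → ℂ)
    (M : Matrix (ZMod d) (ZMod d) ℂ) : ℂ :=
  ∑ r : ZMod d, ∑ s : ZMod d, (starRingEnd ℂ) (a r) * M r s * a s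

/-- `G(i,k) = Σ_r conj(a_r)·conj(a_{r+k−i})·a_{r−i}·a_{r+k}`. -/
noncomputable def Gfun (d : ℕ) [NeZero d] (a : ZMod d → ℂ) (i k : ZMod d) : ℂ :=
  ∑ r : ZMod d,
    (starRingEnd ℂ) (a r) * (starRingEnd ℂ) (a (r + k - i)) * a (r - i) * a (r + k)

lemma omeg_prim (d : ℕ) [NeZero d] : IsPrimitiveRoot (omeg d) d :=
  Complex.isPrimitiveRoot_exp d (NeZero.ne d)

lemma omeg_pow_mod (d : ℕ) [NeZero d] (m : ℕ) : omeg d ^ m = omeg d ^ (m % d) := by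
  conv_lhs => rw [← Nat.mod_add_div m d]
  rw [pow_add, pow_mul, (omeg_prim d).pow_eq_one, one_pow, mul_one]

lemma omeg_mod (d : ℕ) [NeZero d] {m n : ℕ} (h : m ≡ n [MOD d]) :
    omeg d ^ m = omeg d ^ n := by
  rw [omeg_pow_mod d m, omeg_pow_mod d n, h]

lemma omeg_abs (d : ℕ) [NeZero d] : ‖omeg d‖ = 1 := by
  have h : (2 * (Real.pi : ℂ) * Complex.I / (d : ℂ)) = ((2 * Real.pi / d : ℝ) : ℂ) * Complex.I := by
    push_cast; ring
  rw [omeg, h, Complex.norm_exp_ofReal_mul_I]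

lemma omeg_mul_conj (d : ℕ) [NeZero d] (n : ℕ) :
    omeg d ^ n * (starRingEnd ℂ) (omeg d ^ n) = 1 := by
  rw [Complex.mul_conj, Complex.normSq_eq_norm_sq, norm_pow, omeg_abs]
  simp

lemma sum_val_range (d : ℕ) [NeZero d] {M : Type*} [AddCommMonoid M] (f : ℕ → M) :
    ∑ j : ZMod d, f (ZMod.val j) = ∑ j ∈ Finset.range d, f j := by
  apply Finset.sum_nbij' (i := fun j : ZMod d => j.val) (j := fun n : ℕ => (n : ZMod d))
  · intro a _; exact Finset.mem_range.mpr (ZMod.val_lt a)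
  · intro a _; exact Finset.mem_univ _
  · intro a _; simp [ZMod.natCast_val, ZMod.cast_id]
  · intro b hb; exact ZMod.val_cast_of_lt (Finset.mem_range.mp hb)
  · intro a _; rfl

lemma orth (d : ℕ) [NeZero d] (m : ZMod d) :
    ∑ j : ZMod d, omeg d ^ (j.val * m.val) = if m = 0 then (d : ℂ) else 0 := by
  have h : ∀ j : ZMod d, omeg d ^ (j.val * m.val) = (omeg d ^ m.val) ^ j.val := fun j => by
    rw [← pow_mul, mul_comm]
  simp_rw [h]
  rw [sum_val_range d (fun n => (omeg d ^ m.val) ^ n)]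
  by_cases hm : m = 0
  · subst hm; simp
  · rw [if_neg hm]
    have hx1 : omeg d ^ m.val ≠ 1 := by
      intro h1
      have hdvd := ((omeg_prim d).pow_eq_one_iff_dvd _).mp h1
      exact hm ((ZMod.val_eq_zero m).mp (Nat.eq_zero_of_dvd_of_lt hdvd (ZMod.val_lt m)))
    rw [geom_sum_eq hx1]
    have hxd : (omeg d ^ m.val) ^ d = 1 := by
      rw [← pow_mul, mul_comm, pow_mul, (omeg_prim d).pow_eq_one, one_pow]
    rw [hxd]
    simp

lemma Xpow (d : ℕ) [NeZero d] (n : ℕ) (r s : ZMod d) :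
    (Xmat d ^ n) r s = if r = s + (n : ZMod d) then 1 else 0 := by
  induction n generalizing r s with
  | zero => simp [Matrix.one_apply]
  | succ n ih =>
    rw [pow_succ, Matrix.mul_apply]
    simp_rw [ih, Xmat]
    rw [Finset.sum_eq_single (s + 1)]
    · have : s + (↑(n + 1) : ZMod d) = s + 1 + (n : ZMod d) := by push_cast; ring
      rw [this]; simp
    · intro b _ hb; simp [hb]
    · simp

lemma Zpow (d : ℕ) [NeZero d] (n : ℕ) (r s : ZMod d) :
    (Zmat d ^ n) r s = if r = s then omeg d ^ (n * r.val) else 0 := by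
  induction n generalizing r s with
  | zero => simp [Matrix.one_apply]
  | succ n ih =>
    rw [pow_succ, Matrix.mul_apply]
    simp_rw [ih, Zmat]
    rw [Finset.sum_eq_single r]
    · by_cases h : r = s
      · subst h; simp [pow_add, pow_mul, add_mul, one_mul]
      · simp [h]
    · intro b _ hb; simp [Ne.symm hb]
    · simp

lemma XZ_entry (d : ℕ) [NeZero d] (i j : ZMod d) (r s : ZMod d) :
    (Xmat d ^ i.val * Zmat d ^ j.val) r s
      = if r = s + i then omeg d ^ (j.val * s.val) else 0 := by
  rw [Matrix.mul_apply]
  simp_rw [Xpow, Zpow]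
  rw [Finset.sum_eq_single s]
  · rw [ZMod.natCast_val, ZMod.cast_id]; simp
  · intro b _ hb; simp [hb]
  · simp

lemma overlap_eq (d : ℕ) [NeZero d] (a : ZMod d → ℂ) (i j : ZMod d) :
    overlap d a (Xmat d ^ i.val * Zmat d ^ j.val)
      = ∑ s : ZMod d, (starRingEnd ℂ) (a (s + i)) * omeg d ^ (j.val * s.val) * a s := by
  unfold overlap
  simp_rw [XZ_entry]
  rw [Finset.sum_comm]
  refine Finset.sum_congr rfl fun s _ => ?_
  rw [Finset.sum_eq_single (s + i)]
  · simp
  · intro b _ hb; simp [hb]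
  · simp

lemma phase1 (d : ℕ) [NeZero d] (j s k : ZMod d) :
    omeg d ^ (j.val * s.val) * (starRingEnd ℂ) (omeg d ^ (j.val * (s + k).val))
      = (starRingEnd ℂ) (omeg d ^ (j.val * k.val)) := by
  have h1 : omeg d ^ (j.val * (s + k).val)
      = omeg d ^ (j.val * s.val) * omeg d ^ (j.val * k.val) := by
    rw [← pow_add, ← mul_add]
    apply omeg_mod
    exact Nat.ModEq.mul_left j.val (by rw [ZMod.val_add]; exact Nat.mod_modEq _ _)
  rw [h1, map_mul, ← mul_assoc, omeg_mul_conj, one_mul]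

lemma phase2 (d : ℕ) [NeZero d] (j k k0 : ZMod d) :
    (starRingEnd ℂ) (omeg d ^ (j.val * k.val)) * omeg d ^ (j.val * k0.val)
      = (starRingEnd ℂ) (omeg d ^ (j.val * (k - k0).val)) := by
  have h1 : omeg d ^ (j.val * k.val)
      = omeg d ^ (j.val * (k - k0).val) * omeg d ^ (j.val * k0.val) := by
    rw [← pow_add, ← mul_add]
    apply omeg_mod
    have : ((k - k0) + k0).val = k.val := by rw [sub_add_cancel]
    calc j.val * k.val = j.val * ((k - k0) + k0).val := by rw [this]
      _ ≡ j.val * ((k - k0).val + k0.val) [MOD d] :=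
        Nat.ModEq.mul_left j.val (by rw [ZMod.val_add]; exact Nat.mod_modEq _ _)
  rw [h1, map_mul, mul_assoc, mul_comm ((starRingEnd ℂ) (omeg d ^ (j.val * k0.val))),
    omeg_mul_conj, mul_one]

lemma key (d : ℕ) [NeZero d] (a : ZMod d → ℂ) (i j : ZMod d) :
    (((‖overlap d a (Xmat d ^ i.val * Zmat d ^ j.val)‖) ^ 2 : ℝ) : ℂ)
      = ∑ k : ZMod d, Gfun d a i k * (starRingEnd ℂ) (omeg d ^ (j.val * k.val)) := by
  have habs : ∀ z : ℂ, ((‖z‖ ^ 2 : ℝ) : ℂ) = z * (starRingEnd ℂ) z := by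
    intro z; rw [Complex.sq_norm, Complex.mul_conj]
  rw [habs, overlap_eq, map_sum, Finset.sum_mul_sum]
  calc
    ∑ s : ZMod d, ∑ t : ZMod d,
        ((starRingEnd ℂ) (a (s + i)) * omeg d ^ (j.val * s.val) * a s) *
          (starRingEnd ℂ) ((starRingEnd ℂ) (a (t + i)) * omeg d ^ (j.val * t.val) * a t)
      = ∑ s : ZMod d, ∑ k : ZMod d,
        ((starRingEnd ℂ) (a (s + i)) * omeg d ^ (j.val * s.val) * a s) *
          (starRingEnd ℂ) ((starRingEnd ℂ) (a ((s + k) + i)) * omeg d ^ (j.val * (s + k).val) * a (s + k))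
        := Finset.sum_congr rfl fun s _ =>
          (Fintype.sum_equiv (Equiv.addLeft s) _ _ fun k => rfl).symm
    _ = ∑ k : ZMod d, ∑ s : ZMod d,
        ((starRingEnd ℂ) (a (s + i)) * omeg d ^ (j.val * s.val) * a s) *
          (starRingEnd ℂ) ((starRingEnd ℂ) (a ((s + k) + i)) * omeg d ^ (j.val * (s + k).val) * a (s + k))
        := Finset.sum_comm
    _ = ∑ k : ZMod d, Gfun d a i k * (starRingEnd ℂ) (omeg d ^ (j.val * k.val)) := by
        refine Finset.sum_congr rfl fun k _ => ?_
        rw [Gfun, Finset.sum_mul]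
        refine Fintype.sum_equiv (Equiv.addRight i) _ _ fun s => ?_
        simp only [Equiv.coe_addRight, map_mul, Complex.conj_conj]
        have e1 : a (s + i + k - i) = a (s + k) := by congr 1; ring
        have e2 : a (s + i - i) = a s := by congr 1; ring
        have e3 : a (s + i + k) = a (s + k + i) := by congr 1; ring
        rw [e1, e2, e3, ← phase1 d j s k]
        ring

lemma orth_snd (d : ℕ) [NeZero d] (j : ZMod d) :
    ∑ k : ZMod d, omeg d ^ (j.val * k.val) = if j = 0 then (d : ℂ) else 0 := by
  simp_rw [mul_comm (ZMod.val j)]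
  exact orth d j

lemma orthc (d : ℕ) [NeZero d] (j : ZMod d) :
    ∑ k : ZMod d, (starRingEnd ℂ) (omeg d ^ (j.val * k.val)) = if j = 0 then (d : ℂ) else 0 := by
  rw [← map_sum, orth_snd, apply_ite (starRingEnd ℂ)]
  simp

lemma orth2 (d : ℕ) [NeZero d] (k k0 : ZMod d) :
    ∑ j : ZMod d, (starRingEnd ℂ) (omeg d ^ (j.val * k.val)) * omeg d ^ (j.val * k0.val)
      = if k = k0 then (d : ℂ) else 0 := by
  simp_rw [phase2 d _ k k0]
  rw [← map_sum, orth, apply_ite (starRingEnd ℂ)]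
  simp [sub_eq_zero]

lemma delta_sum (d : ℕ) [NeZero d] (j : ZMod d) :
    ∑ k : ZMod d, (if k = 0 then (1:ℂ) else 0) * (starRingEnd ℂ) (omeg d ^ (j.val * k.val))
      = 1 := by
  rw [Finset.sum_eq_single 0]
  · simp [ZMod.val_zero]
  · intro b _ hb; simp [hb]
  · simp

lemma delta_sum' (d : ℕ) [NeZero d] (k0 : ZMod d) :
    ∑ j : ZMod d, (if j = 0 then (1:ℂ) else 0) * omeg d ^ (j.val * k0.val) = 1 := by
  rw [Finset.sum_eq_single 0]
  · simp [ZMod.val_zero]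
  · intro b _ hb; simp [hb]
  · simp

/-- For `d ≥ 2` and `a : ℤ/dℤ → ℂ`, the SIC overlap conditions
`|⟨a|X^iZ^j|a⟩|² = (d·δ_{i,0}·δ_{j,0} + 1)/(d+1)` for all `i, j` are equivalent to
`G(i,k) = (δ_{i,0} + δ_{k,0})/(d+1)` for all `i, k`. -/
theorem stmt_15 (d : ℕ) [NeZero d] (hd : 2 ≤ d) (a : ZMod d → ℂ) :
    (∀ i j : ZMod d,
        (‖overlap d a (Xmat d ^ i.val * Zmat d ^ j.val)‖) ^ 2
          = ((d : ℝ) * (if i = 0 then 1 else 0) * (if j = 0 then 1 else 0) + 1) / ((d : ℝ) + 1))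
    ↔
    (∀ i k : ZMod d,
        Gfun d a i k
          = ((if i = 0 then (1 : ℂ) else 0) + (if k = 0 then 1 else 0)) / ((d : ℂ) + 1)) := by
  have hd0 : (d : ℂ) ≠ 0 := Nat.cast_ne_zero.mpr (NeZero.ne d)
  have hd1 : (d : ℂ) + 1 ≠ 0 := by
    have : ((d + 1 : ℕ) : ℂ) ≠ 0 := Nat.cast_ne_zero.mpr (by omega)
    push_cast at this; exact this
  constructor
  · intro H i k0
    have hk : ∀ j : ZMod d,
        ∑ k : ZMod d, Gfun d a i k * (starRingEnd ℂ) (omeg d ^ (j.val * k.val))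
          = ((d : ℂ) * (if i = 0 then 1 else 0) * (if j = 0 then 1 else 0) + 1) / ((d : ℂ) + 1) := by
      intro j
      rw [← key, H i j]
      push_cast [apply_ite (Complex.ofReal)]
      norm_num
    have hS1 : ∑ j : ZMod d,
        (∑ k : ZMod d, Gfun d a i k * (starRingEnd ℂ) (omeg d ^ (j.val * k.val)))
          * omeg d ^ (j.val * k0.val) = (d : ℂ) * Gfun d a i k0 := by
      simp_rw [Finset.sum_mul]
      rw [Finset.sum_comm]
      have : ∀ k : ZMod d,
          ∑ j : ZMod d, Gfun d a i k * (starRingEnd ℂ) (omeg d ^ (j.val * k.val))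
            * omeg d ^ (j.val * k0.val)
          = Gfun d a i k * (if k = k0 then (d : ℂ) else 0) := by
        intro k
        simp_rw [mul_assoc, ← Finset.mul_sum]
        rw [orth2]
      simp_rw [this]
      rw [Finset.sum_eq_single k0]
      · simp [mul_comm]
      · intro b _ hb; simp [hb]
      · simp
    have hS2 : ∑ j : ZMod d,
        (∑ k : ZMod d, Gfun d a i k * (starRingEnd ℂ) (omeg d ^ (j.val * k.val)))
          * omeg d ^ (j.val * k0.val)
        = ((d : ℂ) * (if i = 0 then 1 else 0) + (if k0 = 0 then (d : ℂ) else 0)) / ((d : ℂ) + 1) := by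
      simp_rw [hk, div_mul_eq_mul_div, ← Finset.sum_div, add_mul, one_mul]
      rw [Finset.sum_add_distrib]
      simp_rw [mul_assoc ((d : ℂ) * (if i = 0 then (1:ℂ) else 0))]
      rw [← Finset.mul_sum, delta_sum', orth d k0, mul_one]
    rw [hS2] at hS1
    apply mul_left_cancel₀ hd0
    rw [← hS1]
    split_ifs <;> field_simp <;> ring
  · intro H i j
    rw [← Complex.ofReal_inj, key]
    simp_rw [H i]
    have expand : ∑ k : ZMod d,
        (((if i = 0 then (1:ℂ) else 0) + (if k = 0 then 1 else 0)) / ((d : ℂ) + 1))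
          * (starRingEnd ℂ) (omeg d ^ (j.val * k.val))
        = ((if i = 0 then (1:ℂ) else 0)
            * (∑ k : ZMod d, (starRingEnd ℂ) (omeg d ^ (j.val * k.val)))
          + ∑ k : ZMod d, (if k = 0 then (1:ℂ) else 0)
              * (starRingEnd ℂ) (omeg d ^ (j.val * k.val))) / ((d : ℂ) + 1) := by
      simp_rw [div_mul_eq_mul_div, ← Finset.sum_div, add_mul]
      rw [Finset.sum_add_distrib, ← Finset.mul_sum]
    rw [expand, orthc, delta_sum]
    push_cast [apply_ite (Complex.ofReal)]
    norm_num
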